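/- Let p_t(y) = (2πt)^{−1/2} e^{−y²/(2t)} for t > 0, y ∈ ℝ, define Q((s,x),(t,y)) = ∫₀^{min(s,t)} p_{s+t−2r}(x−y) dr, and define V(s,t,x,y) = Q((s,x),(s,x)) + Q((t,x),(t,x)) + Q((s,y),(s,y)) + Q((t,y),(t,y)) − 2Q((s,x),(t,x)) − 2Q((s,x),(s,y)) + 2Q((s,x),(t,y)) + 2Q((t,x),(s,y)) − 2Q((t,x),(t,y)) − 2Q((s,y),(t,y)). Define ρ : [0,∞) → [0,∞) by ρ(u) = √(2/π) ∫₀^u r^{−1/2}(1 − e^{−1/r}) dr. Then for all s, t > 0 and x, y ∈ ℝ with x ≠ y, V(s,t,x,y) ≤ |x − y| · ρ(|t − s| / |x − y|²). -/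

import Mathlib

open MeasureTheory Set

/-- One-dimensional heat kernel `p_t(y) = (2πt)^{−1/2} e^{−y²/(2t)}`. -/
noncomputable def heatK (t y : ℝ) : ℝ :=
  (Real.sqrt (2 * Real.pi * t))⁻¹ * Real.exp (-y ^ 2 / (2 * t))

/-- Covariance `Q((s,x),(t,y)) = ∫₀^{s∧t} p_{s+t−2r}(x−y) dr` of the mild solution of
the stochastic heat equation with additive space-time white noise. -/
noncomputable def heatQ (s x t y : ℝ) : ℝ :=
  ∫ r in Set.Ioc (0:ℝ) (min s t), heatK (s + t - 2 * r) (x - y)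

/-- Second moment `V(s,t,x,y) = E[(u(t,y) − u(t,x) − u(s,y) + u(s,x))²]` of the
rectangular increment, expressed through the covariance `Q`. -/
noncomputable def heatV (s t x y : ℝ) : ℝ :=
  heatQ s x s x + heatQ t x t x + heatQ s y s y + heatQ t y t y
    - 2 * heatQ s x t x - 2 * heatQ s x s y + 2 * heatQ s x t y
    + 2 * heatQ t x s y - 2 * heatQ t x t y - 2 * heatQ s y t y

/-- The function `ρ(u) = √(2/π) ∫₀^u r^{−1/2}(1 − e^{−1/r}) dr`. -/
noncomputable def rhoFn (u : ℝ) : ℝ :=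
  Real.sqrt (2 / Real.pi) *
    ∫ r in Set.Ioc (0:ℝ) u, r ^ (-(1:ℝ)/2) * (1 - Real.exp (-(1 / r)))

lemma heatK_of_nonpos {u : ℝ} (y : ℝ) (hu : u ≤ 0) : heatK u y = 0 := by
  have h : Real.sqrt (2 * Real.pi * u) = 0 :=
    Real.sqrt_eq_zero'.mpr (by nlinarith [Real.pi_pos])
  simp [heatK, h]

lemma heatK_nonneg (u y : ℝ) : 0 ≤ heatK u y :=
  mul_nonneg (inv_nonneg.2 (Real.sqrt_nonneg _)) (Real.exp_pos _).le

lemma heatK_le (u y : ℝ) : heatK u y ≤ heatK u 0 := by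
  rcases le_or_gt u 0 with hu | hu
  · simp [heatK_of_nonpos _ hu]
  · unfold heatK
    apply mul_le_mul_of_nonneg_left _ (inv_nonneg.2 (Real.sqrt_nonneg _))
    apply Real.exp_le_exp.mpr
    have h2u : 0 < 2 * u := by linarith
    have : (0:ℝ) ≤ y ^ 2 / (2 * u) := by positivity
    have h0 : (-(0:ℝ) ^ 2) / (2 * u) = 0 := by norm_num
    rw [h0, neg_div]
    linarith

lemma rpow_neg_half {u : ℝ} (hu : 0 < u) : u ^ (-(1:ℝ)/2) = (Real.sqrt u)⁻¹ := by
  rw [neg_div, Real.rpow_neg hu.le, Real.sqrt_eq_rpow]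

lemma heatK_eq {u : ℝ} (hu : 0 < u) (y : ℝ) :
    heatK u y = (Real.sqrt (2 * Real.pi))⁻¹ * (Real.sqrt u)⁻¹ * Real.exp (-y ^ 2 / (2 * u)) := by
  unfold heatK
  rw [Real.sqrt_mul (by positivity) u, mul_inv]

lemma intervalIntegrable_heatK (y : ℝ) {A B : ℝ} (hA : 0 ≤ A) (hB : 0 ≤ B) :
    IntervalIntegrable (fun u => heatK u y) volume A B := by
  have hm : IntervalIntegrable (fun u : ℝ => (Real.sqrt (2 * Real.pi))⁻¹ * u ^ (-(1:ℝ)/2))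
      volume A B :=
    (intervalIntegral.intervalIntegrable_rpow' (by norm_num)).const_mul _
  refine hm.mono_fun ?_ ?_
  · apply Measurable.aestronglyMeasurable
    unfold heatK
    fun_prop
  · refine (ae_restrict_iff' measurableSet_uIoc).mpr ?_
    filter_upwards with u hu
    have hu0 : 0 < u := lt_of_le_of_lt (le_min hA hB) hu.1
    have h1 : heatK u y ≤ (Real.sqrt (2 * Real.pi))⁻¹ * u ^ (-(1:ℝ)/2) := by
      rw [rpow_neg_half hu0, heatK_eq hu0]
      calc (Real.sqrt (2*Real.pi))⁻¹ * (Real.sqrt u)⁻¹ * Real.exp (-y^2/(2*u))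
          ≤ (Real.sqrt (2*Real.pi))⁻¹ * (Real.sqrt u)⁻¹ * 1 := by
            apply mul_le_mul_of_nonneg_left _ (by positivity)
            rw [← Real.exp_zero]
            apply Real.exp_le_exp.mpr
            have : (0:ℝ) ≤ y^2/(2*u) := by positivity
            rw [neg_div]; linarith
        _ = (Real.sqrt (2*Real.pi))⁻¹ * (Real.sqrt u)⁻¹ := mul_one _
    have h2 : (0:ℝ) ≤ (Real.sqrt (2 * Real.pi))⁻¹ * u ^ (-(1:ℝ)/2) := by positivity
    simp only [Real.norm_eq_abs, abs_of_nonneg (heatK_nonneg u y), abs_of_nonneg h2]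
    exact h1

lemma heatQ_eq (s t x y : ℝ) (hs : 0 ≤ s) (ht : 0 ≤ t) :
    heatQ s x t y = (2:ℝ)⁻¹ * ∫ u in |s - t|..(s + t), heatK u (x - y) := by
  have hm : (0:ℝ) ≤ min s t := le_min hs ht
  have key : (∫ r in (0:ℝ)..(min s t), heatK (s + t - 2 * r) (x - y))
      = (2:ℝ)⁻¹ • ∫ u in (s + t - 2 * min s t)..(s + t - 2 * 0), heatK u (x - y) :=
    intervalIntegral.integral_comp_sub_mul (fun u => heatK u (x - y)) two_ne_zero (s + t)
  have h1 : s + t - 2 * min s t = |s - t| := by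
    rcases le_total s t with h | h
    · rw [min_eq_left h, abs_of_nonpos (by linarith)]; ring
    · rw [min_eq_right h, abs_of_nonneg (by linarith)]; ring
  have h2 : s + t - 2 * (0:ℝ) = s + t := by ring
  rw [heatQ, ← intervalIntegral.integral_of_le hm, key, h1, h2, smul_eq_mul]

lemma heatV_eq (s t x y : ℝ) (hs : 0 ≤ s) (ht : 0 ≤ t) :
    heatV s t x y =
      (∫ u in (0:ℝ)..(s + s), (heatK u 0 - heatK u (x - y)))
      + (∫ u in (0:ℝ)..(t + t), (heatK u 0 - heatK u (x - y)))
      - 2 * ∫ u in |s - t|..(s + t), (heatK u 0 - heatK u (x - y)) := by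
  have e1 : heatQ s x s x = (2:ℝ)⁻¹ * ∫ u in (0:ℝ)..(s + s), heatK u 0 := by
    rw [heatQ_eq s s x x hs hs]; simp
  have e2 : heatQ t x t x = (2:ℝ)⁻¹ * ∫ u in (0:ℝ)..(t + t), heatK u 0 := by
    rw [heatQ_eq t t x x ht ht]; simp
  have e3 : heatQ s y s y = (2:ℝ)⁻¹ * ∫ u in (0:ℝ)..(s + s), heatK u 0 := by
    rw [heatQ_eq s s y y hs hs]; simp
  have e4 : heatQ t y t y = (2:ℝ)⁻¹ * ∫ u in (0:ℝ)..(t + t), heatK u 0 := by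
    rw [heatQ_eq t t y y ht ht]; simp
  have e5 : heatQ s x t x = (2:ℝ)⁻¹ * ∫ u in |s - t|..(s + t), heatK u 0 := by
    rw [heatQ_eq s t x x hs ht]; simp
  have e6 : heatQ s x s y = (2:ℝ)⁻¹ * ∫ u in (0:ℝ)..(s + s), heatK u (x - y) := by
    rw [heatQ_eq s s x y hs hs]; simp
  have e7 : heatQ s x t y = (2:ℝ)⁻¹ * ∫ u in |s - t|..(s + t), heatK u (x - y) := by
    rw [heatQ_eq s t x y hs ht]
  have e8 : heatQ t x s y = (2:ℝ)⁻¹ * ∫ u in |s - t|..(s + t), heatK u (x - y) := by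
    rw [heatQ_eq t s x y ht hs, abs_sub_comm t s, add_comm t s]
  have e9 : heatQ t x t y = (2:ℝ)⁻¹ * ∫ u in (0:ℝ)..(t + t), heatK u (x - y) := by
    rw [heatQ_eq t t x y ht ht]; simp
  have e10 : heatQ s y t y = (2:ℝ)⁻¹ * ∫ u in |s - t|..(s + t), heatK u 0 := by
    rw [heatQ_eq s t y y hs ht]; simp
  have hab : (0:ℝ) ≤ |s - t| := abs_nonneg _
  have d1 : (∫ u in (0:ℝ)..(s + s), (heatK u 0 - heatK u (x - y)))
      = (∫ u in (0:ℝ)..(s + s), heatK u 0) - ∫ u in (0:ℝ)..(s + s), heatK u (x - y) :=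
    intervalIntegral.integral_sub (intervalIntegrable_heatK 0 le_rfl (by linarith))
      (intervalIntegrable_heatK _ le_rfl (by linarith))
  have d2 : (∫ u in (0:ℝ)..(t + t), (heatK u 0 - heatK u (x - y)))
      = (∫ u in (0:ℝ)..(t + t), heatK u 0) - ∫ u in (0:ℝ)..(t + t), heatK u (x - y) :=
    intervalIntegral.integral_sub (intervalIntegrable_heatK 0 le_rfl (by linarith))
      (intervalIntegrable_heatK _ le_rfl (by linarith))
  have d3 : (∫ u in |s - t|..(s + t), (heatK u 0 - heatK u (x - y)))
      = (∫ u in |s - t|..(s + t), heatK u 0) - ∫ u in |s - t|..(s + t), heatK u (x - y) :=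
    intervalIntegral.integral_sub (intervalIntegrable_heatK 0 hab (by linarith))
      (intervalIntegrable_heatK _ hab (by linarith))
  rw [heatV, e1, e2, e3, e4, e5, e6, e7, e8, e9, e10, d1, d2, d3]
  ring

lemma gK_eq (a : ℝ) {w : ℝ} (hw : 0 < w) :
    heatK w 0 - heatK w a
      = (Real.sqrt (2 * Real.pi))⁻¹ * ((Real.sqrt w)⁻¹ * (1 - Real.exp (-a ^ 2 / (2 * w)))) := by
  rw [heatK_eq hw, heatK_eq hw]
  have h0 : (-(0:ℝ) ^ 2) / (2 * w) = 0 := by norm_num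
  rw [h0, Real.exp_zero]; ring

lemma gK_anti (a : ℝ) {u v : ℝ} (hu : 0 < u) (huv : u ≤ v) :
    heatK v 0 - heatK v a ≤ heatK u 0 - heatK u a := by
  have hv : 0 < v := lt_of_lt_of_le hu huv
  rw [gK_eq a hu, gK_eq a hv]
  apply mul_le_mul_of_nonneg_left _ (by positivity)
  have hEv : Real.exp (-a ^ 2 / (2 * v)) ≤ 1 := by
    rw [← Real.exp_zero]
    apply Real.exp_le_exp.mpr
    rw [neg_div]
    have : (0:ℝ) ≤ a ^ 2 / (2 * v) := by positivity
    linarith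
  have hEuv : Real.exp (-a ^ 2 / (2 * u)) ≤ Real.exp (-a ^ 2 / (2 * v)) := by
    apply Real.exp_le_exp.mpr
    rw [neg_div, neg_div, neg_le_neg_iff]
    gcongr
  apply mul_le_mul
  · exact inv_anti₀ (Real.sqrt_pos.mpr hu) (Real.sqrt_le_sqrt huv)
  · linarith
  · linarith
  · positivity

lemma heatV_le_int (s t x y : ℝ) (hs : 0 < s) (hst : s ≤ t) :
    heatV s t x y ≤ 2 * ∫ u in (0:ℝ)..(t - s), (heatK u 0 - heatK u (x - y)) := by
  have ht : 0 < t := lt_of_lt_of_le hs hst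
  have hg_int : ∀ A B : ℝ, 0 ≤ A → 0 ≤ B →
      IntervalIntegrable (fun u => heatK u 0 - heatK u (x - y)) volume A B :=
    fun A B hA hB => (intervalIntegrable_heatK 0 hA hB).sub (intervalIntegrable_heatK _ hA hB)
  rw [heatV_eq s t x y hs.le ht.le,
    show |s - t| = t - s by rw [abs_sub_comm]; exact abs_of_nonneg (by linarith)]
  have i1 : (∫ u in (0:ℝ)..(t - s), (heatK u 0 - heatK u (x - y)))
        + (∫ u in (t - s)..(s + t), (heatK u 0 - heatK u (x - y)))
      = ∫ u in (0:ℝ)..(s + t), (heatK u 0 - heatK u (x - y)) :=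
    intervalIntegral.integral_add_adjacent_intervals
      (hg_int _ _ le_rfl (by linarith)) (hg_int _ _ (by linarith) (by linarith))
  have i2 : (∫ u in (0:ℝ)..(s + s), (heatK u 0 - heatK u (x - y)))
        + (∫ u in (s + s)..(s + t), (heatK u 0 - heatK u (x - y)))
      = ∫ u in (0:ℝ)..(s + t), (heatK u 0 - heatK u (x - y)) :=
    intervalIntegral.integral_add_adjacent_intervals
      (hg_int _ _ le_rfl (by linarith)) (hg_int _ _ (by linarith) (by linarith))
  have i3 : (∫ u in (0:ℝ)..(s + t), (heatK u 0 - heatK u (x - y)))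
        + (∫ u in (s + t)..(t + t), (heatK u 0 - heatK u (x - y)))
      = ∫ u in (0:ℝ)..(t + t), (heatK u 0 - heatK u (x - y)) :=
    intervalIntegral.integral_add_adjacent_intervals
      (hg_int _ _ le_rfl (by linarith)) (hg_int _ _ (by linarith) (by linarith))
  have shift : (∫ u in (s + t)..(t + t), (heatK u 0 - heatK u (x - y)))
      ≤ ∫ u in (s + s)..(s + t), (heatK u 0 - heatK u (x - y)) := by
    have e := intervalIntegral.integral_comp_add_right (a := s + s) (b := s + t)
      (fun u => heatK u 0 - heatK u (x - y)) (t - s)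
    rw [show s + s + (t - s) = s + t by ring, show s + t + (t - s) = t + t by ring] at e
    rw [← e]
    apply intervalIntegral.integral_mono_on (by linarith)
    · have h2 := (hg_int (s + t) (t + t) (by linarith) (by linarith)).comp_add_right (t - s)
      have : s + t - (t - s) = s + s := by ring
      have h3 : t + t - (t - s) = s + t := by ring
      rw [this, h3] at h2
      exact h2
    · exact hg_int _ _ (by linarith) (by linarith)
    · intro u hu
      have hu0 : 0 < u := lt_of_lt_of_le (by linarith) hu.1
      exact gK_anti (x - y) hu0 (by linarith)
  linarith [i1, i2, i3, shift]

lemma two_div_sqrt : Real.sqrt (2 / Real.pi) * Real.sqrt (2 * Real.pi) = 2 := by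
  rw [← Real.sqrt_mul (by positivity)]
  rw [show 2 / Real.pi * (2 * Real.pi) = 4 by field_simp [Real.pi_ne_zero]; ring]
  rw [show (4:ℝ) = 2 ^ 2 by norm_num, Real.sqrt_sq (by norm_num)]

lemma gval (a r : ℝ) (ha : a ≠ 0) (hr : 0 < r) :
    2 * a ^ 2 * (heatK (a ^ 2 * r) 0 - heatK (a ^ 2 * r) a)
      = |a| * (Real.sqrt (2 / Real.pi)
          * (r ^ (-(1:ℝ)/2) * (1 - Real.exp (-(1 / (2 * r)))))) := by
  have hu : 0 < a ^ 2 * r := by positivity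
  rw [gK_eq a hu, rpow_neg_half hr]
  have hexp : -a ^ 2 / (2 * (a ^ 2 * r)) = -(1 / (2 * r)) := by
    rw [neg_div, neg_inj, div_eq_div_iff (by positivity) (by positivity)]; ring
  rw [hexp]
  have hsq : Real.sqrt (a ^ 2 * r) = |a| * Real.sqrt r := by
    rw [Real.sqrt_mul (by positivity), Real.sqrt_sq_eq_abs]
  rw [hsq]
  have h2 : Real.sqrt (2 / Real.pi) * Real.sqrt (2 * Real.pi) = 2 := two_div_sqrt
  have ha' : |a| ≠ 0 := abs_ne_zero.mpr ha
  have hr' : Real.sqrt r ≠ 0 := (Real.sqrt_pos.mpr hr).ne'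
  have hp' : Real.sqrt (2 * Real.pi) ≠ 0 := (Real.sqrt_pos.mpr (by positivity)).ne'
  have haa : a ^ 2 = |a| ^ 2 := (sq_abs a).symm
  rw [haa]
  field_simp
  ring_nf
  have h3 : Real.sqrt (Real.pi * 2) * Real.sqrt (Real.pi⁻¹ * 2) = 2 := by
    rw [show Real.pi * 2 = 2 * Real.pi by ring, show Real.pi⁻¹ * 2 = 2 / Real.pi by ring, mul_comm]
    exact h2
  linear_combination (Real.exp (r⁻¹ * (-1 / 2)) - 1) * h3

lemma int_le_rho (a τ : ℝ) (ha : a ≠ 0) (hτ : 0 ≤ τ) :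
    2 * ∫ u in (0:ℝ)..τ, (heatK u 0 - heatK u a) ≤ |a| * rhoFn (τ / a ^ 2) := by
  have ha2 : (0:ℝ) < a ^ 2 := by positivity
  set U : ℝ := τ / a ^ 2 with hUdef
  have hU0 : 0 ≤ U := by positivity
  -- substitution u = a^2 r
  have subst : (∫ u in (0:ℝ)..τ, (heatK u 0 - heatK u a))
      = a ^ 2 * ∫ r in (0:ℝ)..U, (heatK (a ^ 2 * r) 0 - heatK (a ^ 2 * r) a) := by
    have e := intervalIntegral.integral_comp_mul_left (a := (0:ℝ)) (b := U)
      (fun u => heatK u 0 - heatK u a) (c := a ^ 2) ha2.ne'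
    rw [show a ^ 2 * (0:ℝ) = 0 by ring, show a ^ 2 * U = τ by rw [hUdef]; field_simp] at e
    rw [e, smul_eq_mul]
    field_simp
  rw [subst, intervalIntegral.integral_of_le hU0]
  unfold rhoFn
  have lhs_eq : 2 * (a ^ 2 * ∫ r in Ioc (0:ℝ) U, (heatK (a ^ 2 * r) 0 - heatK (a ^ 2 * r) a))
      = ∫ r in Ioc (0:ℝ) U, 2 * a ^ 2 * (heatK (a ^ 2 * r) 0 - heatK (a ^ 2 * r) a) := by
    rw [integral_const_mul]; ring
  have rhs_eq : |a| * (Real.sqrt (2 / Real.pi) *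
        ∫ r in Ioc (0:ℝ) U, r ^ (-(1:ℝ)/2) * (1 - Real.exp (-(1 / r))))
      = ∫ r in Ioc (0:ℝ) U,
          |a| * (Real.sqrt (2 / Real.pi) * (r ^ (-(1:ℝ)/2) * (1 - Real.exp (-(1 / r))))) := by
    rw [integral_const_mul, integral_const_mul]
  rw [lhs_eq, rhs_eq]
  -- integrability of LHS integrand
  have hf_int : IntegrableOn
      (fun r => 2 * a ^ 2 * (heatK (a ^ 2 * r) 0 - heatK (a ^ 2 * r) a)) (Ioc (0:ℝ) U) := by
    rw [← intervalIntegrable_iff_integrableOn_Ioc_of_le hU0]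
    have h1 : IntervalIntegrable (fun u => heatK u 0 - heatK u a) volume 0 τ :=
      (intervalIntegrable_heatK 0 le_rfl hτ).sub (intervalIntegrable_heatK a le_rfl hτ)
    have h2 := (h1.comp_mul_left (c := a ^ 2))
    rw [show (0:ℝ) / a ^ 2 = 0 by ring, show τ / a ^ 2 = U from rfl] at h2
    exact h2.const_mul _
  -- integrability of RHS integrand
  have hg_int : IntegrableOn
      (fun r => |a| * (Real.sqrt (2 / Real.pi)
        * (r ^ (-(1:ℝ)/2) * (1 - Real.exp (-(1 / r)))))) (Ioc (0:ℝ) U) := by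
    rw [← intervalIntegrable_iff_integrableOn_Ioc_of_le hU0]
    have hdom : IntervalIntegrable
        (fun r : ℝ => (|a| * Real.sqrt (2 / Real.pi)) * r ^ (-(1:ℝ)/2)) volume 0 U :=
      (intervalIntegral.intervalIntegrable_rpow' (by norm_num)).const_mul _
    refine hdom.mono_fun ?_ ?_
    · apply Measurable.aestronglyMeasurable
      fun_prop
    · refine (ae_restrict_iff' measurableSet_uIoc).mpr ?_
      filter_upwards with r hr
      have hr0 : 0 < r := lt_of_le_of_lt (le_min le_rfl hU0) hr.1
      have hE : Real.exp (-(1 / r)) ≤ 1 :=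
        Real.exp_le_one_iff.mpr (neg_nonpos.mpr (by positivity))
      have hE0 : 0 ≤ 1 - Real.exp (-(1 / r)) := by linarith
      have hrp : (0:ℝ) ≤ r ^ (-(1:ℝ)/2) := Real.rpow_nonneg hr0.le _
      have hb : |a| * (Real.sqrt (2 / Real.pi) * (r ^ (-(1:ℝ)/2) * (1 - Real.exp (-(1 / r)))))
          ≤ (|a| * Real.sqrt (2 / Real.pi)) * r ^ (-(1:ℝ)/2) := by
        have h1e : 1 - Real.exp (-(1 / r)) ≤ 1 := by
          have := Real.exp_pos (-(1 / r)); linarith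
        calc |a| * (Real.sqrt (2 / Real.pi) * (r ^ (-(1:ℝ)/2) * (1 - Real.exp (-(1 / r)))))
            ≤ |a| * (Real.sqrt (2 / Real.pi) * (r ^ (-(1:ℝ)/2) * 1)) := by
              gcongr
          _ = (|a| * Real.sqrt (2 / Real.pi)) * r ^ (-(1:ℝ)/2) := by ring
      have hnn : 0 ≤ |a| * (Real.sqrt (2 / Real.pi)
          * (r ^ (-(1:ℝ)/2) * (1 - Real.exp (-(1 / r))))) := by positivity
      have hnn2 : 0 ≤ (|a| * Real.sqrt (2 / Real.pi)) * r ^ (-(1:ℝ)/2) := by positivity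
      rw [Real.norm_eq_abs, Real.norm_eq_abs, abs_of_nonneg hnn, abs_of_nonneg hnn2]
      exact hb
  refine setIntegral_mono_on hf_int hg_int measurableSet_Ioc ?_
  intro r hr
  rw [gval a r ha hr.1]
  have hrp : (0:ℝ) ≤ r ^ (-(1:ℝ)/2) := Real.rpow_nonneg hr.1.le _
  have hEE : Real.exp (-(1 / r)) ≤ Real.exp (-(1 / (2 * r))) := by
    apply Real.exp_le_exp.mpr
    rw [neg_le_neg_iff]
    exact one_div_le_one_div_of_le hr.1 (by linarith [hr.1])
  gcongr

lemma heatQ_symm (s x t y : ℝ) : heatQ s x t y = heatQ t y s x := by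
  unfold heatQ
  rw [min_comm]
  have h : (fun r => heatK (s + t - 2 * r) (x - y))
      = fun r => heatK (t + s - 2 * r) (y - x) := by
    funext r
    unfold heatK
    rw [add_comm s t, show (x - y) ^ 2 = (y - x) ^ 2 by ring]
  rw [h]

lemma heatV_symm (s t x y : ℝ) : heatV s t x y = heatV t s x y := by
  unfold heatV
  rw [heatQ_symm t x s x, heatQ_symm t y s y, heatQ_symm t x s y, heatQ_symm s x t y]
  ring

theorem heatV_le_rho' (s t x y : ℝ) (hs : 0 < s) (ht : 0 < t) (hxy : x ≠ y)
    (hst : s ≤ t) :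
    heatV s t x y ≤ |x - y| * rhoFn (|t - s| / |x - y| ^ 2) := by
  have ha : x - y ≠ 0 := sub_ne_zero.mpr hxy
  calc heatV s t x y
      ≤ 2 * ∫ u in (0:ℝ)..(t - s), (heatK u 0 - heatK u (x - y)) :=
        heatV_le_int s t x y hs hst
    _ ≤ |x - y| * rhoFn ((t - s) / (x - y) ^ 2) := int_le_rho _ _ ha (by linarith)
    _ = |x - y| * rhoFn (|t - s| / |x - y| ^ 2) := by
        rw [abs_of_nonneg (by linarith : (0:ℝ) ≤ t - s), sq_abs]

/-- **Unified bound on the increment variance (Remark 5.5).** For all `s, t > 0` and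
`x ≠ y`, `V(s,t,x,y) ≤ |x − y| ρ(|t − s|/|x − y|²)`. -/
theorem heatV_le_rho (s t x y : ℝ) (hs : 0 < s) (ht : 0 < t) (hxy : x ≠ y) :
    heatV s t x y ≤ |x - y| * rhoFn (|t - s| / |x - y| ^ 2) := by
  rcases le_total s t with hst | hst
  · exact heatV_le_rho' s t x y hs ht hxy hst
  · rw [heatV_symm, show |t - s| = |s - t| from abs_sub_comm t s]
    exact heatV_le_rho' t s x y ht hs hxy hst
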